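/- Let n, k be positive integers with k odd and gcd(k,n) = 1, and let d = (3^k + 1)/2. Then the power function x^d on GF(3^n) is AP_cN for c = -1: for every a ≠ 0 and every b in GF(3^n), the equation (x+a)^d + x^d = b has at most 2 solutions, and the maximum over all a, b of the number of solutions of (x+a)^d + x^d = b (including a = 0) equals 2. -/

import Mathlib

/-! Auxiliary number-theoretic lemmas -/

lemma dvd_pow_sub_one_gcd (g a b : ℕ) (ha : g ∣ 3^a - 1) (hb : g ∣ 3^b - 1) :
    g ∣ 3^(Nat.gcd a b) - 1 := by
  have h3 : ∀ e : ℕ, (1:ℕ) ≤ 3^e := fun e => Nat.one_le_pow _ _ (by norm_num)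
  have ha' : (1:ℕ) ≡ 3^a [MOD g] := (Nat.modEq_iff_dvd' (h3 a)).mpr ha
  have hb' : (1:ℕ) ≡ 3^b [MOD g] := (Nat.modEq_iff_dvd' (h3 b)).mpr hb
  have ha2 : ((3:ZMod g))^a = 1 := by
    have := (ZMod.natCast_eq_natCast_iff _ _ _).mpr ha'.symm
    push_cast at this; exact this
  have hb2 : ((3:ZMod g))^b = 1 := by
    have := (ZMod.natCast_eq_natCast_iff _ _ _).mpr hb'.symm
    push_cast at this; exact this
  have hord : orderOf (3 : ZMod g) ∣ Nat.gcd a b :=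
    Nat.dvd_gcd (orderOf_dvd_of_pow_eq_one ha2) (orderOf_dvd_of_pow_eq_one hb2)
  have hg : ((3:ZMod g))^(Nat.gcd a b) = 1 := orderOf_dvd_iff_pow_eq_one.mp hord
  have : (1:ℕ) ≡ 3^(Nat.gcd a b) [MOD g] := by
    rw [← ZMod.natCast_eq_natCast_iff]
    push_cast
    exact hg.symm
  exact (Nat.modEq_iff_dvd' (h3 _)).mp this

lemma three_pow_mod8 (k : ℕ) (hk : Odd k) : 3^k % 8 = 3 := by
  obtain ⟨j, rfl⟩ := hk
  rw [pow_succ, pow_mul, Nat.mul_mod, Nat.pow_mod]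
  norm_num

lemma arith_basic (k : ℕ) (hk : Odd k) :
    2 * ((3^k+1)/2) = 3^k + 1 ∧ 2 * ((3^k-1)/2) = 3^k - 1 ∧
    ((3^k+1)/2) % 4 = 2 ∧ ((3^k-1)/2) % 2 = 1 ∧ (3^k+1)/2 = (3^k-1)/2 + 1 := by
  have h8 := three_pow_mod8 k hk
  have h1 : 1 ≤ 3^k := Nat.one_le_pow _ _ (by norm_num)
  refine ⟨by omega, by omega, by omega, by omega, by omega⟩

lemma coprime_m (n k : ℕ) (hk : Odd k) (hkn : Nat.gcd k n = 1) :
    Nat.Coprime ((3^k-1)/2) (3^(2*n) - 1) := by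
  have h8 := three_pow_mod8 k hk
  have h1 : 1 ≤ 3^k := Nat.one_le_pow _ _ (by norm_num)
  set m := (3^k-1)/2 with hm
  have h2m : 2 * m = 3^k - 1 := by omega
  have hmodd : m % 2 = 1 := by omega
  have hg : Nat.gcd m (3^(2*n)-1) ∣ 3^(Nat.gcd k (2*n)) - 1 := by
    apply dvd_pow_sub_one_gcd
    · exact dvd_trans (Nat.gcd_dvd_left _ _) ⟨2, by omega⟩
    · exact Nat.gcd_dvd_right _ _
  have hk2n : Nat.gcd k (2*n) = 1 := by
    have h2 : Nat.Coprime k 2 := Nat.coprime_comm.mp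
      ((Nat.Prime.coprime_iff_not_dvd Nat.prime_two).mpr (by
        rw [Nat.odd_iff] at hk; omega))
    exact Nat.Coprime.mul_right h2 hkn
  rw [hk2n] at hg
  norm_num at hg
  have hgm : Nat.gcd m (3^(2*n)-1) ∣ m := Nat.gcd_dvd_left _ _
  rcases (Nat.dvd_prime Nat.prime_two).mp hg with h | h
  · exact h
  · rw [h] at hgm; omega

lemma gcd_d (n k : ℕ) (hn : 0 < n) (hk : Odd k) (hkn : Nat.gcd k n = 1) :
    Nat.gcd ((3^k+1)/2) (3^n - 1) = 2 := by
  have h8 := three_pow_mod8 k hk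
  have h1 : 1 ≤ 3^k := Nat.one_le_pow _ _ (by norm_num)
  set d := (3^k+1)/2 with hd
  have h2d : 2 * d = 3^k + 1 := by omega
  have hd4 : d % 4 = 2 := by omega
  have h3n : 1 ≤ 3^n := Nat.one_le_pow _ _ (by norm_num)
  have h3nodd : 3 ^ n % 2 = 1 := Nat.odd_iff.mp (Odd.pow ⟨1, by norm_num⟩)
  set g := Nat.gcd d (3^n - 1) with hgdef
  have hg8 : g ∣ 3^(Nat.gcd (2*k) n) - 1 := by
    have hstep1 : d ∣ 3^k + 1 := ⟨2, by omega⟩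
    have hstep2 : (3^k + 1) ∣ 3^(2*k) - 1 := by
      have hx : 3^(2*k) = 3^k * 3^k := by rw [two_mul, pow_add]
      refine ⟨3^k - 1, ?_⟩
      rw [hx]
      obtain ⟨y, hy⟩ : ∃ y, 3^k = y + 1 := ⟨3^k - 1, by omega⟩
      rw [hy]
      have hr : (y+1)*(y+1) = (y+1+1)*(y+1-1) + 1 := by
        simp only [Nat.add_sub_cancel]; ring
      omega
    exact dvd_pow_sub_one_gcd _ _ _
      (dvd_trans (Nat.gcd_dvd_left _ _) (dvd_trans hstep1 hstep2))
      (Nat.gcd_dvd_right _ _)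
  have hgcd2 : Nat.gcd (2*k) n ∣ 2 := by
    have h := Nat.dvd_gcd (Nat.gcd_dvd_left (2*k) n)
      (dvd_trans (Nat.gcd_dvd_right (2*k) n) ⟨2, by ring⟩ : Nat.gcd (2*k) n ∣ 2*n)
    rwa [Nat.gcd_mul_left, hkn, mul_one] at h
  have hg8' : g ∣ 8 := by
    refine dvd_trans hg8 ?_
    rcases (Nat.dvd_prime Nat.prime_two).mp hgcd2 with h | h <;> rw [h] <;> norm_num
  have h2g : 2 ∣ g := Nat.dvd_gcd (by omega) (by omega)
  have hgd : g ∣ d := Nat.gcd_dvd_left _ _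
  have hgle : g ≤ 8 := Nat.le_of_dvd (by norm_num) hg8'
  clear_value g
  clear hgdef
  interval_cases g <;> omega

/-! Field-theoretic lemmas -/

lemma char3' {F : Type*} [Field F] [Fintype F] (n : ℕ) (hn : 0 < n)
    (hcard : Fintype.card F = 3 ^ n) : CharP F 3 := by
  have hc : CharP F (ringChar F) := ringChar.charP F
  obtain ⟨m, hp, hcard'⟩ := FiniteField.card F (ringChar F)
  have hdvd : ringChar F ∣ 3 ^ n := by
    rw [← hcard, hcard']
    exact dvd_pow_self _ (by positivity)
  have h3 : ringChar F = 3 :=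
    (Nat.prime_dvd_prime_iff_eq hp (by norm_num)).mp (hp.dvd_of_dvd_pow hdvd)
  rwa [h3] at hc

lemma quad_roots' {K : Type*} [Field K] (B z₁ z₂ : K)
    (h1 : z₁^2 + B*z₁ + 1 = 0) (h2 : z₂^2 + B*z₂ + 1 = 0) :
    z₂ = z₁ ∨ z₂ * z₁ = 1 := by
  have h : (z₂ - z₁) * (z₂*z₁ - 1) = 0 := by linear_combination z₁ * h2 - z₂ * h1
  rcases mul_eq_zero.mp h with h | h
  · left; exact sub_eq_zero.mp h
  · right; linear_combination h

lemma key_identity {K : Type*} [Field K] [CharP K 3] (k d m : ℕ)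
    (h2d : 2*d = 3^k+1) (hdm : d = m+1) (h2m1 : 2*m+1 = 3^k) (hdeven : Even d)
    (v y : K) (hv0 : v ≠ 0) (hv : v^2 + y*v + 1 = 0) :
    v^m * ((y+1)^d - (y-1)^d) = -((v^m)^2 + 1) := by
  haveI : Fact (Nat.Prime 3) := ⟨by norm_num⟩
  have h3 : (3:K) = 0 := CharP.cast_eq_zero K 3
  have e1 : v*(y+1) = -((v+1)^2) := by linear_combination hv + v*h3
  have e2 : v*(y-1) = -((v-1)^2) := by linear_combination hv - v*h3
  have hfr : (v+1)^(3^k) = v^(3^k) + 1 := by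
    have h := add_pow_char_pow (R := K) (p := 3) (n := k) (x := v) (y := 1)
    simpa using h
  have hfr2 : (v-1)^(3^k) = v^(3^k) - 1 := by
    have h := add_pow_char_pow (R := K) (p := 3) (n := k) (x := v) (y := -1)
    have hodd : Odd (3^k) := Odd.pow ⟨1, by norm_num⟩
    rw [hodd.neg_one_pow] at h
    simpa [sub_eq_add_neg] using h
  have hvd1 : (v^m * v) * (y+1)^d = (v^(3^k)+1) * (v+1) := by
    calc (v^m * v) * (y+1)^d = v^d * (y+1)^d := by rw [hdm, pow_succ v m]
    _ = (v*(y+1))^d := (mul_pow _ _ _).symm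
    _ = ((v+1)^2)^d := by rw [e1]; exact hdeven.neg_pow _
    _ = (v+1)^(3^k+1) := by rw [← pow_mul, h2d]
    _ = (v^(3^k)+1)*(v+1) := by rw [pow_succ, hfr]
  have hvd2 : (v^m * v) * (y-1)^d = (v^(3^k)-1) * (v-1) := by
    calc (v^m * v) * (y-1)^d = v^d * (y-1)^d := by rw [hdm, pow_succ v m]
    _ = (v*(y-1))^d := (mul_pow _ _ _).symm
    _ = ((v-1)^2)^d := by rw [e2]; exact hdeven.neg_pow _
    _ = (v-1)^(3^k+1) := by rw [← pow_mul, h2d]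
    _ = (v^(3^k)-1)*(v-1) := by rw [pow_succ, hfr2]
  have hW : (v^m)^2 * v = v^(3^k) := by
    rw [← pow_mul, ← pow_succ]; congr 1; omega
  apply mul_left_cancel₀ hv0
  linear_combination hvd1 - hvd2 + hW + (v^(3^k) + v) * h3

lemma frob_fix {K : Type*} [Field K] [CharP K 3] (n : ℕ) (y v : K) (hy : y^(3^n) = y)
    (hv : v^2 + y*v + 1 = 0) (hv0 : v ≠ 0) : v^(3^(2*n)) = v := by
  haveI : Fact (Nat.Prime 3) := ⟨by norm_num⟩
  have hq : (v^(3^n))^2 + y*(v^(3^n)) + 1 = 0 := by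
    have h0 : (v^2 + y*v + 1)^(3^n) = 0 := by rw [hv]; exact zero_pow (by positivity)
    rw [add_pow_char_pow, add_pow_char_pow, one_pow, mul_pow, hy, ← pow_mul,
      mul_comm 2 (3^n), pow_mul] at h0
    exact h0
  have hsplit : v^(3^(2*n)) = (v^(3^n))^(3^n) := by
    rw [← pow_mul]; congr 1; rw [two_mul, pow_add]
  rcases quad_roots' y v (v^(3^n)) hv hq with h | h
  · rw [hsplit, h, h]
  · have hinv : v^(3^n) = v⁻¹ := eq_inv_of_mul_eq_one_left h
    rw [hsplit, hinv, inv_pow, hinv, inv_inv]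

lemma g_inj {F : Type*} [Field F] [Fintype F] (n k : ℕ) (hn : 0 < n) (hk : Odd k)
    (hkn : Nat.gcd k n = 1) (hcard : Fintype.card F = 3^n) :
    Function.Injective (fun y : F => (y+1)^((3^k+1)/2) - (y-1)^((3^k+1)/2)) := by
  haveI := char3' n hn hcard
  haveI : Fact (Nat.Prime 3) := ⟨by norm_num⟩
  obtain ⟨h2d, h2m, hd4, hm2, hdm⟩ := arith_basic k hk
  have h1k : 1 ≤ 3^k := Nat.one_le_pow _ _ (by norm_num)
  set d := (3^k+1)/2 with hd_def
  set m := (3^k-1)/2 with hm_def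
  have hdeven : Even d := Nat.even_iff.mpr (by omega)
  have h2m1 : 2*m+1 = 3^k := by omega
  have hdm' : d = m + 1 := hdm
  have hcop := coprime_m n k hk hkn
  intro y₁ y₂ heq
  simp only at heq
  set Ω := AlgebraicClosure F
  set ι := algebraMap F Ω with hι
  haveI : CharP Ω 3 := inferInstance
  have hroot : ∀ y : F, ∃ v : Ω, v ≠ 0 ∧ v^2 + (ι y)*v + 1 = 0 := by
    intro y
    obtain ⟨v, hv⟩ := IsAlgClosed.exists_root
      (Polynomial.X^2 + Polynomial.C (ι y) * Polynomial.X + 1 : Polynomial Ω)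
      (by
        intro hdeg
        have h2 : (Polynomial.X^2 + Polynomial.C (ι y) * Polynomial.X + 1 : Polynomial Ω).degree = 2 := by
          compute_degree!
        rw [h2] at hdeg; exact (by norm_num : (2:WithBot ℕ) ≠ 0) hdeg)
    have hv' : v^2 + (ι y)*v + 1 = 0 := by
      simpa [Polynomial.IsRoot] using hv
    refine ⟨v, ?_, hv'⟩
    intro h0
    rw [h0] at hv'
    simp at hv'
  obtain ⟨v₁, hv10, hv1⟩ := hroot y₁
  obtain ⟨v₂, hv20, hv2⟩ := hroot y₂
  have hyfix : ∀ y : F, (ι y)^(3^n) = ι y := by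
    intro y; rw [← map_pow]; congr 1; rw [← hcard]; exact FiniteField.pow_card y
  have hvfix₁ := frob_fix n (ι y₁) v₁ (hyfix y₁) hv1 hv10
  have hvfix₂ := frob_fix n (ι y₂) v₂ (hyfix y₂) hv2 hv20
  have hN : ∀ v : Ω, v ≠ 0 → v^(3^(2*n)) = v → v^(3^(2*n)-1) = 1 := by
    intro v hv0 hfix
    apply mul_right_cancel₀ hv0
    rw [one_mul, ← pow_succ]
    have he : 3^(2*n) - 1 + 1 = 3^(2*n) := by
      have : 1 ≤ 3^(2*n) := Nat.one_le_pow _ _ (by norm_num)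
      omega
    rw [he, hfix]
  have hN₁ := hN v₁ hv10 hvfix₁
  have hN₂ := hN v₂ hv20 hvfix₂
  set B : Ω := (ι y₁ + 1)^d - (ι y₁ - 1)^d with hB
  have hBeq : (ι y₂ + 1)^d - (ι y₂ - 1)^d = B := by
    rw [hB]
    have h1 : ∀ y : F, (ι y + 1)^d - (ι y - 1)^d = ι ((y+1)^d - (y-1)^d) := by
      intro y; simp [map_sub, map_pow, map_add, map_one]
    rw [h1, h1, heq]
  have hkey₁ := key_identity k d m h2d hdm' h2m1 hdeven v₁ (ι y₁) hv10 hv1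
  have hkey₂ := key_identity k d m h2d hdm' h2m1 hdeven v₂ (ι y₂) hv20 hv2
  have hz₁ : (v₁^m)^2 + B * (v₁^m) + 1 = 0 := by
    rw [hB]; linear_combination hkey₁
  have hz₂ : (v₂^m)^2 + B * (v₂^m) + 1 = 0 := by
    rw [← hBeq]; linear_combination hkey₂
  have hordfact : ∀ w : Ω, w^m = 1 → w^(3^(2*n)-1) = 1 → w = 1 := by
    intro w hw1 hw2
    have hord : orderOf w ∣ Nat.gcd m (3^(2*n)-1) :=
      Nat.dvd_gcd (orderOf_dvd_of_pow_eq_one hw1) (orderOf_dvd_of_pow_eq_one hw2)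
    rw [hcop] at hord
    exact orderOf_eq_one_iff.mp (Nat.dvd_one.mp hord)
  have hy12 : ι y₁ = ι y₂ := by
    rcases quad_roots' B (v₁^m) (v₂^m) hz₁ hz₂ with h | h
    · have hw1 : (v₁/v₂)^m = 1 := by
        rw [div_pow, h, div_self (pow_ne_zero _ hv10)]
      have hw2 : (v₁/v₂)^(3^(2*n)-1) = 1 := by
        rw [div_pow, hN₁, hN₂]; norm_num
      have hvv : v₁ = v₂ := by
        have := hordfact _ hw1 hw2
        rw [div_eq_one_iff_eq hv20] at this
        exact this
      have hv2' : v₁^2 + (ι y₂)*v₁ + 1 = 0 := by rw [hvv]; exact hv2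
      have h0 : (ι y₁ - ι y₂) * v₁ = 0 := by linear_combination hv1 - hv2'
      rcases mul_eq_zero.mp h0 with h0 | h0
      · exact sub_eq_zero.mp h0
      · exact absurd h0 hv10
    · have hw1 : (v₁*v₂)^m = 1 := by rw [mul_pow, mul_comm]; exact h
      have hw2 : (v₁*v₂)^(3^(2*n)-1) = 1 := by rw [mul_pow, hN₁, hN₂, one_mul]
      have hprod : v₁ * v₂ = 1 := hordfact _ hw1 hw2
      have hv2' : 1 + (ι y₂)*v₁ + v₁^2 = 0 := by
        linear_combination v₁^2 * hv2 - (1 + v₁*v₂ + (ι y₂) * v₁) * hprod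
      have h0 : (ι y₂ - ι y₁) * v₁ = 0 := by linear_combination hv2' - hv1
      rcases mul_eq_zero.mp h0 with h0 | h0
      · exact (sub_eq_zero.mp h0).symm
      · exact absurd h0 hv10
  exact (algebraMap F Ω).injective hy12

lemma deriv_inj {F : Type*} [Field F] [Fintype F] (n k : ℕ) (hn : 0 < n) (hk : Odd k)
    (hkn : Nat.gcd k n = 1) (hcard : Fintype.card F = 3^n) (s : F) (hs : s ≠ 0) :
    Function.Injective (fun x : F => (x+s)^((3^k+1)/2) - x^((3^k+1)/2)) := by
  haveI := char3' n hn hcard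
  have h3 : (3:F) = 0 := CharP.cast_eq_zero F 3
  obtain ⟨h2d, h2m, hd4, hm2, hdm⟩ := arith_basic k hk
  set d := (3^k+1)/2 with hd_def
  have hdeven : Even d := Nat.even_iff.mpr (by omega)
  intro x₁ x₂ hx
  simp only at hx
  have key : ∀ x : F, s^d * (((1 - x/s)+1)^d - ((1 - x/s)-1)^d) = (x+s)^d - x^d := by
    intro x
    have hxs : s * (x/s) = x := mul_div_cancel₀ x hs
    have e1 : s * ((1 - x/s)+1) = -(x+s) := by
      rw [mul_add, mul_sub, mul_one, hxs]
      linear_combination s * h3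
    have e2 : s * ((1 - x/s)-1) = -x := by
      rw [mul_sub, mul_sub, mul_one, hxs]
      ring
    calc s^d * (((1-x/s)+1)^d - ((1-x/s)-1)^d)
        = (s*((1-x/s)+1))^d - (s*((1-x/s)-1))^d := by
          rw [mul_sub, ← mul_pow, ← mul_pow]
    _ = (x+s)^d - x^d := by
          rw [e1, e2, hdeven.neg_pow, hdeven.neg_pow]
  have hy := g_inj n k hn hk hkn hcard (a₁ := 1 - x₁/s) (a₂ := 1 - x₂/s) (by
    simp only
    apply mul_left_cancel₀ (pow_ne_zero d hs)
    rw [key, key]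
    exact hx)
  have hxx : x₁ / s = x₂ / s := by linear_combination -hy
  have := congrArg (fun t => t * s) hxx
  simpa [div_mul_cancel₀, hs] using this

/-! Main statement -/

def cDelta {F : Type*} [Field F] [Fintype F] [DecidableEq F]
    (f : F → F) (c a b : F) : ℕ :=
  (Finset.univ.filter (fun x : F => f (x + a) - c * f x = b)).card

def cUnif {F : Type*} [Field F] [Fintype F] [DecidableEq F]
    (f : F → F) (c : F) : ℕ :=
  Finset.univ.sup fun a : F => Finset.univ.sup fun b : F => cDelta f c a b

theorem stmt7 {F : Type*} [Field F] [Fintype F] [DecidableEq F]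
    (n k : ℕ) (hn : 0 < n) (hk : Odd k) (hkn : Nat.gcd k n = 1)
    (hcard : Fintype.card F = 3 ^ n) :
    (∀ a : F, a ≠ 0 → ∀ b : F,
      (Finset.univ.filter
        (fun x : F => (x + a) ^ ((3 ^ k + 1) / 2) + x ^ ((3 ^ k + 1) / 2) = b)).card ≤ 2) ∧
    cUnif (fun x : F => x ^ ((3 ^ k + 1) / 2)) (-1 : F) = 2 := by
  haveI := char3' n hn hcard
  haveI : Fact (Nat.Prime 3) := ⟨by norm_num⟩
  have h3 : (3:F) = 0 := CharP.cast_eq_zero F 3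
  obtain ⟨h2d, h2m, hd4, hm2, hdm⟩ := arith_basic k hk
  have hgcd2 := gcd_d n k hn hk hkn
  set d := (3^k+1)/2 with hd_def
  have hdeven : Even d := Nat.even_iff.mpr (by omega)
  have hdpos : 0 < d := by omega
  -- x^d = y^d implies x = ±y
  have hL1 : ∀ x y : F, x^d = y^d → x = y ∨ x = -y := by
    intro x y hxy
    by_cases hy : y = 0
    · left
      rw [hy] at hxy ⊢
      rw [zero_pow (by omega)] at hxy
      exact pow_eq_zero_iff (by omega) |>.mp hxy
    · have hx0 : x ≠ 0 := by
        intro h0; rw [h0, zero_pow (by omega)] at hxy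
        exact hy (pow_eq_zero_iff (by omega) |>.mp hxy.symm)
      set z := x / y with hz
      have hz0 : z ≠ 0 := div_ne_zero hx0 hy
      have hzd : z^d = 1 := by rw [hz, div_pow, hxy, div_self (pow_ne_zero _ hy)]
      have hzq : z^(3^n - 1) = 1 := by
        rw [← hcard]; exact FiniteField.pow_card_sub_one_eq_one z hz0
      have hord : orderOf z ∣ 2 := by
        rw [← hgcd2]
        exact Nat.dvd_gcd (orderOf_dvd_of_pow_eq_one hzd) (orderOf_dvd_of_pow_eq_one hzq)
      have hz2 : z^2 = 1 := orderOf_dvd_iff_pow_eq_one.mp hord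
      have hz1 : z = 1 ∨ z = -1 := mul_self_eq_one_iff.mp (by rw [← pow_two]; exact hz2)
      rcases hz1 with h | h
      · left
        rw [hz, div_eq_one_iff_eq hy] at h
        exact h
      · right
        rw [hz, div_eq_iff hy] at h
        rw [h]; ring
  -- the key bound for a ≠ 0
  have hmain : ∀ a : F, a ≠ 0 → ∀ b : F,
      (Finset.univ.filter (fun x : F => (x + a)^d + x^d = b)).card ≤ 2 := by
    intro a ha b
    by_contra hcon
    push_neg at hcon
    rw [Finset.two_lt_card_iff] at hcon
    obtain ⟨x₁, x₂, x₃, h1, h2, h3', h12, h13, h23⟩ := hcon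
    simp only [Finset.mem_filter, Finset.mem_univ, true_and] at h1 h2 h3'
    have hpair : ∀ u w : F, u ≠ w → (u+a)^d + u^d = b → (w+a)^d + w^d = b → u + w = -a := by
      intro u w huw hu hw
      have hs : u - w ≠ 0 := sub_ne_zero.mpr huw
      have hinj := deriv_inj n k hn hk hkn hcard (u - w) hs (a₁ := w + a) (a₂ := -u) (by
        simp only
        have harg1 : w + a + (u - w) = u + a := by ring
        have harg2 : -u + (u - w) = -w := by ring
        rw [harg1, harg2, hdeven.neg_pow, hdeven.neg_pow]
        linear_combination hu - hw)
      linear_combination hinj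
    have e12 := hpair x₁ x₂ h12 h1 h2
    have e13 := hpair x₁ x₃ h13 h1 h3'
    exact h23 (by linear_combination e12 - e13)
  refine ⟨hmain, ?_⟩
  -- rewrite cDelta
  have hcd : ∀ a b : F, cDelta (fun x : F => x^d) (-1) a b =
      (Finset.univ.filter (fun x : F => (x + a)^d + x^d = b)).card := by
    intro a b
    unfold cDelta
    congr 1
    apply Finset.filter_congr
    intro x _
    constructor <;> intro h <;> linear_combination h
  -- the a = 0 bound
  have hzero : ∀ b : F, (Finset.univ.filter (fun x : F => (x + 0)^d + x^d = b)).card ≤ 2 := by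
    intro b
    by_cases hne : (Finset.univ.filter (fun x : F => (x + 0)^d + x^d = b)).Nonempty
    · obtain ⟨x₀, hx₀⟩ := hne
      simp only [Finset.mem_filter, Finset.mem_univ, true_and, add_zero] at hx₀
      have hsub : (Finset.univ.filter (fun x : F => (x + 0)^d + x^d = b)) ⊆ {x₀, -x₀} := by
        intro x hx
        simp only [Finset.mem_filter, Finset.mem_univ, true_and, add_zero] at hx
        have hdd : x^d = x₀^d := by
          linear_combination 2*hx - 2*hx₀ + (x₀^d - x^d)*h3
        rcases hL1 x x₀ hdd with h | h
        · simp [h]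
        · simp [h]
      calc (Finset.univ.filter (fun x : F => (x + 0)^d + x^d = b)).card
          ≤ ({x₀, -x₀} : Finset F).card := Finset.card_le_card hsub
      _ ≤ 2 := by
          apply le_trans (Finset.card_insert_le _ _)
          simp
    · rw [Finset.not_nonempty_iff_eq_empty] at hne
      rw [hne]; simp
  apply le_antisymm
  · apply Finset.sup_le
    intro a _
    apply Finset.sup_le
    intro b _
    rw [hcd]
    by_cases ha : a = 0
    · subst ha; exact hzero b
    · exact hmain a ha b
  · -- lower bound: a = 0, b = -1 has solutions 1 and -1
    have hsubset : ({1, -1} : Finset F) ⊆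
        (Finset.univ.filter (fun x : F => (x + 0)^d + x^d = (-1:F))) := by
      intro x hx
      simp only [Finset.mem_insert, Finset.mem_singleton] at hx
      simp only [Finset.mem_filter, Finset.mem_univ, true_and, add_zero]
      rcases hx with rfl | rfl
      · rw [one_pow]; linear_combination h3
      · rw [hdeven.neg_pow, one_pow]; linear_combination h3
    have hne11 : (1:F) ≠ -1 := by
      intro h
      have h20 : (2:F) = 0 := by linear_combination h
      have : ((2:ℕ):F) = 0 := by push_cast; exact h20
      rw [CharP.cast_eq_zero_iff F 3 2] at this
      omega
    have hcard2 : ({1, -1} : Finset F).card = 2 := by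
      rw [Finset.card_insert_of_notMem (by simpa using hne11), Finset.card_singleton]
    have h2le : 2 ≤ cDelta (fun x : F => x^d) (-1) 0 (-1) := by
      rw [hcd, ← hcard2]
      exact Finset.card_le_card hsubset
    calc (2:ℕ) ≤ cDelta (fun x : F => x^d) (-1) 0 (-1) := h2le
    _ ≤ Finset.univ.sup (fun b : F => cDelta (fun x : F => x^d) (-1) 0 b) :=
        Finset.le_sup (Finset.mem_univ (-1))
    _ ≤ cUnif (fun x : F => x^d) (-1) := by
        unfold cUnif
        exact Finset.le_sup (f := fun a : F => Finset.univ.sup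
          (fun b : F => cDelta (fun x : F => x^d) (-1) a b)) (Finset.mem_univ (0:F))
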